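/- Let α ≥ 0, γ ≥ 1 be real and β ∈ ℂ with 2(γ+α) > |β|. Then for all z in the open unit disc, the Alexander transform of the normalized Rabotnov function satisfies |𝕀[𝓡_{α,β,γ}](z)| ≤ 2(γ+α)/(2(γ+α)−|β|). -/

import Mathlib

open Complex

lemma gamma_lb {c : ℝ} (hc : 1 ≤ c) (n : ℕ) :
    c ^ n * n.factorial * Real.Gamma c ≤ Real.Gamma (c * (n + 1)) := by
  have hc0 : 0 < c := lt_of_lt_of_le one_pos hc
  induction n with
  | zero => simp
  | succ n ih =>
    push_cast
    have h1 : (0:ℝ) < c * (n + 1) := by positivity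
    have h2 : (2:ℝ) ≤ c * (n + 1) + 1 := by nlinarith [Nat.cast_nonneg (α := ℝ) n]
    have hmono : Real.Gamma (c * (n + 1) + 1) ≤ Real.Gamma (c * ((n:ℝ) + 1 + 1)) := by
      rcases eq_or_lt_of_le (show c * ((n:ℝ)+1) + 1 ≤ c * ((n:ℝ)+1+1) by nlinarith) with h | h
      · rw [h]
      · exact le_of_lt (Real.Gamma_strictMonoOn_Ici h2 (le_trans h2 h.le) h)
    have hrec : Real.Gamma (c * (n + 1) + 1) = c * (n + 1) * Real.Gamma (c * (n + 1)) :=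
      Real.Gamma_add_one h1.ne'
    have key : c ^ (n+1) * ((n+1).factorial : ℝ) * Real.Gamma c
        ≤ c * ((n:ℝ) + 1) * Real.Gamma (c * (n + 1)) := by
      have := mul_le_mul_of_nonneg_left ih (le_of_lt h1)
      calc c ^ (n+1) * ((n+1).factorial : ℝ) * Real.Gamma c
          = c * ((n:ℝ)+1) * (c ^ n * n.factorial * Real.Gamma c) := by
            push_cast [Nat.factorial_succ, pow_succ]; ring
        _ ≤ c * ((n:ℝ) + 1) * Real.Gamma (c * (n + 1)) := this
    calc c ^ (n+1) * ((n+1).factorial : ℝ) * Real.Gamma c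
        ≤ Real.Gamma (c * (n + 1) + 1) := by rw [hrec]; exact key
      _ ≤ Real.Gamma (c * ((n:ℝ) + 1 + 1)) := hmono

noncomputable def rabA (α γ : ℝ) (β : ℂ) (n : ℕ) : ℂ :=
  β ^ n * (Real.Gamma (γ + α) : ℂ) / (Real.Gamma ((γ + α) * (n + 1)) : ℂ)

lemma abs_rabA {α γ : ℝ} {β : ℂ} (hc : 1 ≤ γ + α) (n : ℕ) :
    ‖rabA α γ β n‖ ≤ ‖β‖ ^ n / ((γ + α) ^ n * n.factorial) := by
  set c := γ + α with hcdef
  have hc0 : 0 < c := lt_of_lt_of_le one_pos hc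
  have hG : 0 < Real.Gamma c := Real.Gamma_pos_of_pos hc0
  have hlb := gamma_lb hc n
  have hfpos : (0:ℝ) < (n.factorial : ℝ) := by exact_mod_cast n.factorial_pos
  have hGn : 0 < Real.Gamma (c * (n + 1)) := lt_of_lt_of_le (by positivity) hlb
  rw [rabA, norm_div, norm_mul, norm_pow, Complex.norm_real, Complex.norm_real,
    Real.norm_of_nonneg hG.le, Real.norm_of_nonneg hGn.le]
  rw [div_le_div_iff₀ hGn (by positivity)]
  calc ‖β‖ ^ n * Real.Gamma c * (c ^ n * n.factorial)
      = ‖β‖ ^ n * (c ^ n * n.factorial * Real.Gamma c) := by ring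
    _ ≤ ‖β‖ ^ n * Real.Gamma (c * (n + 1)) :=
        mul_le_mul_of_nonneg_left hlb (by positivity)

noncomputable def rab (α γ : ℝ) (β : ℂ) (z : ℂ) : ℂ :=
  z + ∑' k : ℕ, rabA α γ β (k + 1) * z ^ (k + 2)

noncomputable def rabPartial (α γ : ℝ) (β : ℂ) (m : ℕ) (z : ℂ) : ℂ :=
  z + ∑ k ∈ Finset.range m, rabA α γ β (k + 1) * z ^ (k + 2)

noncomputable def rabD (α γ : ℝ) (β : ℂ) (z : ℂ) : ℂ :=
  1 + ∑' k : ℕ, ((k : ℂ) + 2) * rabA α γ β (k + 1) * z ^ (k + 1)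

noncomputable def rabDPartial (α γ : ℝ) (β : ℂ) (m : ℕ) (z : ℂ) : ℂ :=
  1 + ∑ k ∈ Finset.range m, ((k : ℂ) + 2) * rabA α γ β (k + 1) * z ^ (k + 1)

noncomputable def rabAlex (α γ : ℝ) (β : ℂ) (z : ℂ) : ℂ :=
  z + ∑' k : ℕ, rabA α γ β (k + 1) / ((k : ℂ) + 2) * z ^ (k + 2)

noncomputable def rabAlexPartial (α γ : ℝ) (β : ℂ) (m : ℕ) (z : ℂ) : ℂ :=
  z + ∑ k ∈ Finset.range m, rabA α γ β (k + 1) / ((k : ℂ) + 2) * z ^ (k + 2)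

theorem rabAlex_bound (α γ : ℝ) (β : ℂ) (hα : 0 ≤ α) (hγ : 1 ≤ γ)
    (hβ : ‖β‖ < 2 * (γ + α)) (z : ℂ) (hz : ‖z‖ < 1) :
    ‖rabAlex α γ β z‖ ≤
      2 * (γ + α) / (2 * (γ + α) - ‖β‖) := by
  have hc : 1 ≤ γ + α := by linarith
  set c := γ + α with hcdef
  have hc0 : 0 < c := lt_of_lt_of_le one_pos hc
  set q : ℝ := ‖β‖ / (2 * c) with hq
  have hq0 : 0 ≤ q := by positivity
  have hq1 : q < 1 := by rw [hq, div_lt_one (by positivity)]; exact hβ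
  set t : ℕ → ℂ := fun k => rabA α γ β (k + 1) / ((k : ℂ) + 2) * z ^ (k + 2) with ht
  have hterm : ∀ k : ℕ, ‖t k‖ ≤ q ^ (k + 1) := by
    intro k
    have hfac : (2:ℝ) ^ (k+1) ≤ ((k+2).factorial : ℝ) := by
      have : 2 ^ (k+1) ≤ (k+2).factorial := by
        induction k with
        | zero => norm_num [Nat.factorial]
        | succ m ih =>
          rw [pow_succ, Nat.factorial_succ]
          calc 2 ^ (m+1) * 2 ≤ (m+2).factorial * (m+3) := Nat.mul_le_mul ih (by omega)
            _ = (m+3) * (m+2).factorial := Nat.mul_comm _ _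
      exact_mod_cast this
    have h1 : ‖rabA α γ β (k + 1)‖ ≤
        ‖β‖ ^ (k+1) / (c ^ (k+1) * (k+1).factorial) := abs_rabA hc (k+1)
    have habsk : ‖(k : ℂ) + 2‖ = (k : ℝ) + 2 := by
      rw [show ((k:ℂ)+2) = (((k:ℝ)+2 : ℝ) : ℂ) by push_cast; ring, Complex.norm_real]
      exact Real.norm_of_nonneg (by positivity)
    have hz1 : ‖z‖ ^ (k+2) ≤ 1 :=
      pow_le_one₀ (norm_nonneg z) hz.le
    rw [ht, norm_mul, norm_div, norm_pow, habsk]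
    have hkpos : (0:ℝ) < (k:ℝ) + 2 := by positivity
    have hfpos : (0:ℝ) < ((k+1).factorial : ℝ) := by exact_mod_cast (k+1).factorial_pos
    calc ‖rabA α γ β (k + 1)‖ / ((k:ℝ) + 2) * ‖z‖ ^ (k + 2)
        ≤ ‖rabA α γ β (k + 1)‖ / ((k:ℝ) + 2) * 1 :=
          mul_le_mul_of_nonneg_left hz1 (div_nonneg (norm_nonneg _) hkpos.le)
      _ = ‖rabA α γ β (k + 1)‖ / ((k:ℝ) + 2) := mul_one _
      _ ≤ (‖β‖ ^ (k+1) / (c ^ (k+1) * (k+1).factorial)) / ((k:ℝ) + 2) :=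
          by gcongr
      _ = ‖β‖ ^ (k+1) / (c ^ (k+1) * ((k+2).factorial : ℝ)) := by
          rw [div_div]
          congr 1
          have : ((k+2).factorial : ℝ) = ((k:ℝ) + 2) * (k+1).factorial := by
            push_cast [Nat.factorial_succ]; ring
          rw [this]; ring
      _ ≤ q ^ (k+1) := by
          rw [hq, div_pow, mul_pow]
          apply div_le_div_of_nonneg_left (by positivity) (by positivity)
          calc (2:ℝ) ^ (k+1) * c ^ (k+1) ≤ ((k+2).factorial : ℝ) * c ^ (k+1) :=
                mul_le_mul_of_nonneg_right hfac (by positivity)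
            _ = c ^ (k+1) * ((k+2).factorial : ℝ) := mul_comm _ _
  have hsumg : Summable (fun k : ℕ => q ^ (k+1)) := by
    simpa [pow_succ'] using (summable_geometric_of_lt_one hq0 hq1).mul_left q
  have hsumn : Summable (fun k : ℕ => ‖t k‖) :=
    Summable.of_nonneg_of_le (fun k => norm_nonneg _)
      (fun k => by simpa using hterm k) hsumg
  have htsum : ‖∑' k, t k‖ ≤ q * (1 - q)⁻¹ := by
    calc ‖∑' k, t k‖ ≤ ∑' k, ‖t k‖ := by
          simpa using norm_tsum_le_tsum_norm hsumn
      _ ≤ ∑' k : ℕ, q ^ (k+1) := Summable.tsum_le_tsum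
          (fun k => by simpa using hterm k) hsumn hsumg
      _ = q * (1 - q)⁻¹ := by
          simp only [pow_succ']
          rw [tsum_mul_left, tsum_geometric_of_lt_one hq0 hq1]
  have hfinal : 1 + q * (1 - q)⁻¹ = 2 * c / (2 * c - ‖β‖) := by
    have h1q : (0:ℝ) < 1 - q := by linarith
    have h2 : (0:ℝ) < 2 * c - ‖β‖ := by linarith
    rw [hq]
    field_simp
    ring
  calc ‖rabAlex α γ β z‖ ≤ ‖z‖ + ‖∑' k, t k‖ := by
        rw [rabAlex]; exact norm_add_le _ _
    _ ≤ 1 + q * (1 - q)⁻¹ := add_le_add hz.le htsum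
    _ = 2 * c / (2 * c - ‖β‖) := hfinal
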